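/- (The flux constraint is saturated.) Suppose Ψ₀ > 0 and the feasible set F = {(x,y) ∈ ℝ² : Ψ(x,y) ≥ Ψ₀} is nonempty. If (x*, y*) ∈ F minimizes R over F, then Ψ(x*, y*) = Ψ₀. -/
import Mathlib


open Real Filter

/-- A probability vector `(pE, pES, pEP)` is a stationary distribution of the
three-state cycle chain with rates `a,b,c,d,f,g` if its entries are nonnegative,
sum to 1, and satisfy the global balance equations. -/
def IsStat (a b c d f g pE pES pEP : ℝ) : Prop :=
  0 ≤ pE ∧ 0 ≤ pES ∧ 0 ≤ pEP ∧ pE + pES + pEP = 1 ∧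
  (a + g) * pE = b * pES + f * pEP ∧
  (b + c) * pES = a * pE + d * pEP ∧
  (d + f) * pEP = c * pES + g * pE

/-- explicit solution of the stationary equations (tree formula). -/
lemma stat_solve (a b c d f g pE pES pEP : ℝ)
    (hwE : 0 < b*d + b*f + c*f)
    (h : IsStat a b c d f g pE pES pEP) :
    pE * ((b*d + b*f + c*f) + (a*d + a*f + d*g) + (a*c + b*g + c*g)) = b*d + b*f + c*f ∧
    pES * ((b*d + b*f + c*f) + (a*d + a*f + d*g) + (a*c + b*g + c*g)) = a*d + a*f + d*g ∧
    pEP * ((b*d + b*f + c*f) + (a*d + a*f + d*g) + (a*c + b*g + c*g)) = a*c + b*g + c*g := by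
  obtain ⟨-, -, -, hsum, h1, h2, h3⟩ := h
  have e1 : pEP*(b*d + b*f + c*f) = (a*c + b*g + c*g)*pE := by
    linear_combination (b+c)*h3 + c*h2
  have e2 : pES*(b*d + b*f + c*f) = (a*d + a*f + d*g)*pE := by
    linear_combination (d+f)*h2 + d*h3
  have e3 : pE * ((b*d + b*f + c*f) + (a*d + a*f + d*g) + (a*c + b*g + c*g))
      = b*d + b*f + c*f := by
    linear_combination (b*d + b*f + c*f)*hsum - e2 - e1
  refine ⟨e3, ?_, ?_⟩
  · apply mul_right_cancel₀ hwE.ne'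
    linear_combination ((b*d + b*f + c*f) + (a*d + a*f + d*g) + (a*c + b*g + c*g))*e2
      + (a*d + a*f + d*g)*e3
  · apply mul_right_cancel₀ hwE.ne'
    linear_combination ((b*d + b*f + c*f) + (a*d + a*f + d*g) + (a*c + b*g + c*g))*e1
      + (a*c + b*g + c*g)*e3

set_option maxHeartbeats 1000000 in
/-- The flux constraint is saturated: any minimizer of the sequestered fraction
over the nonempty feasible set `{Ψ ≥ Ψ₀}` satisfies `Ψ(x*,y*) = Ψ₀`. -/
theorem stmt_10
    (k0 k1 kcat S P dmu dGc : ℝ)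
    (hk0 : 0 < k0) (hk1 : 0 < k1) (hkcat : 0 < kcat) (hS : 0 < S) (hP : 0 < P)
    (pE pES pEP R Psi : ℝ → ℝ → ℝ)
    (hstat : ∀ x y : ℝ,
      IsStat (k0 * S) (k0 * exp x)
        (kcat * min 1 (exp (x - y + dmu + dGc)))
        (kcat * exp dGc * min 1 (exp (y - x - dmu - dGc)))
        (k1 * exp y) (k1 * P)
        (pE x y) (pES x y) (pEP x y))
    (hR : ∀ x y : ℝ, R x y = pES x y + pEP x y)
    (hPsi : ∀ x y : ℝ, Psi x y = k0 * S * pE x y - k0 * exp x * pES x y)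
    (Psi0 : ℝ) (hPsi0 : 0 < Psi0)
    (hne : ∃ q : ℝ × ℝ, Psi0 ≤ Psi q.1 q.2)
    (xs ys : ℝ)
    (hfeas : Psi0 ≤ Psi xs ys)
    (hmin : ∀ x y : ℝ, Psi0 ≤ Psi x y → R xs ys ≤ R x y) :
    Psi xs ys = Psi0 := by
  by_contra hne0
  have hgt : Psi0 < Psi xs ys := lt_of_le_of_ne hfeas (Ne.symm hne0)
  set a := k0 * S with ha
  set gg := k1 * P with hgdef
  set b0 := k0 * exp xs with hb0def
  set f0 := k1 * exp ys with hf0def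
  set c0 := kcat * min 1 (exp (xs - ys + dmu + dGc)) with hc0def
  set d0 := kcat * exp dGc * min 1 (exp (ys - xs - dmu - dGc)) with hd0def
  have hapos : 0 < a := mul_pos hk0 hS
  have hgpos : 0 < gg := mul_pos hk1 hP
  have hb0 : 0 < b0 := mul_pos hk0 (exp_pos xs)
  have hf0 : 0 < f0 := mul_pos hk1 (exp_pos ys)
  have hc0 : 0 < c0 := mul_pos hkcat (lt_min one_pos (exp_pos _))
  have hd0 : 0 < d0 := mul_pos (mul_pos hkcat (exp_pos dGc)) (lt_min one_pos (exp_pos _))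
  set A := b0 * f0 with hAdef
  set B := b0 * d0 + c0 * f0 with hBdef
  set al := a * f0 + b0 * gg with haldef
  set D := a * d0 + d0 * gg + a * c0 + c0 * gg with hDdef
  set N := a * c0 * f0 - b0 * d0 * gg with hNdef
  clear_value a gg b0 f0 c0 d0
  have hA : 0 < A := by rw [hAdef]; exact mul_pos hb0 hf0
  have hB : 0 < B := by have := mul_pos hb0 hd0; have := mul_pos hc0 hf0; rw [hBdef]; linarith
  have hal : 0 < al := by have := mul_pos hapos hf0; have := mul_pos hb0 hgpos; rw [haldef]; linarith
  have hD : 0 < D := by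
    have := mul_pos hapos hd0; have := mul_pos hd0 hgpos
    have := mul_pos hapos hc0; have := mul_pos hc0 hgpos; rw [hDdef]; linarith
  clear_value A B al D N
  -- key per-t formulas along the ray (xs+t, ys+t)
  have key : ∀ t : ℝ,
      Psi (xs+t) (ys+t) * (A * (exp t)^2 + (B + al) * exp t + D) = N * exp t ∧
      R (xs+t) (ys+t) * (A * (exp t)^2 + (B + al) * exp t + D) = al * exp t + D := by
    intro t
    have hst := hstat (xs+t) (ys+t)
    have hb : k0 * exp (xs+t) = b0 * exp t := by rw [Real.exp_add, hb0def]; ring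
    have hf : k1 * exp (ys+t) = f0 * exp t := by rw [Real.exp_add, hf0def]; ring
    have hcarg : xs + t - (ys + t) + dmu + dGc = xs - ys + dmu + dGc := by ring
    have hdarg : ys + t - (xs + t) - dmu - dGc = ys - xs - dmu - dGc := by ring
    rw [hb, hf, hcarg, hdarg, ← hc0def, ← hd0def] at hst
    have hwE : 0 < (b0*exp t)*d0 + (b0*exp t)*(f0*exp t) + c0*(f0*exp t) := by
      have h1 := mul_pos (mul_pos hb0 (exp_pos t)) hd0
      have h2 := mul_pos (mul_pos hb0 (exp_pos t)) (mul_pos hf0 (exp_pos t))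
      have h3 := mul_pos hc0 (mul_pos hf0 (exp_pos t))
      linarith
    have hsol := stat_solve a (b0*exp t) c0 d0 (f0*exp t) gg
      (pE (xs+t) (ys+t)) (pES (xs+t) (ys+t)) (pEP (xs+t) (ys+t)) hwE hst
    constructor
    · rw [hPsi (xs+t) (ys+t), hb, hAdef, hBdef, haldef, hDdef, hNdef]
      linear_combination a * hsol.1 - (b0*exp t) * hsol.2.1
    · rw [hR (xs+t) (ys+t), hAdef, hBdef, haldef, hDdef]
      linear_combination hsol.2.1 + hsol.2.2
  have hSig : ∀ t : ℝ, 0 < A * (exp t)^2 + (B + al) * exp t + D := by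
    intro t
    have h1 := mul_pos hA (pow_pos (exp_pos t) 2)
    have h2 := mul_pos (by linarith : (0:ℝ) < B + al) (exp_pos t)
    linarith
  have hPsiEq : ∀ t : ℝ,
      Psi (xs+t) (ys+t) = N * exp t / (A * (exp t)^2 + (B + al) * exp t + D) := by
    intro t
    rw [eq_div_iff (hSig t).ne']
    exact (key t).1
  -- N > 0
  have key0 := (key 0).1
  simp only [add_zero, Real.exp_zero, one_pow, mul_one] at key0
  have hSig0 : 0 < A + (B + al) + D := by linarith
  have hN : 0 < N := by
    rw [← key0]; exact mul_pos (lt_trans hPsi0 hgt) hSig0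
  have hAP : (0:ℝ) < A * Psi0 := mul_pos hA hPsi0
  -- a point t1 where the flux has dropped below Psi0
  set t1 := Real.log (N / (A * Psi0) + 1) with ht1def
  have hquotpos : 0 < N / (A * Psi0) := div_pos hN hAP
  have hu1 : exp t1 = N / (A * Psi0) + 1 := Real.exp_log (by linarith)
  have h1 : A * Psi0 * exp t1 = N + A * Psi0 := by
    rw [hu1]; field_simp
  have ht1pos : 0 < t1 := by
    have h2 : exp 0 < exp t1 := by rw [Real.exp_zero, hu1]; linarith
    exact Real.exp_lt_exp.mp h2
  have hlt : Psi (xs+t1) (ys+t1) < Psi0 := by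
    rw [hPsiEq t1, div_lt_iff₀ (hSig t1)]
    have hu := exp_pos t1
    have h2 : A * Psi0 * exp t1 * exp t1 = (N + A * Psi0) * exp t1 := by rw [h1]
    nlinarith [mul_pos hAP hu, mul_pos hPsi0 (mul_pos (by linarith : (0:ℝ) < B + al) hu),
      mul_pos hPsi0 hD]
  -- IVT on [0, t1]
  have hcont : ContinuousOn (fun t => Psi (xs+t) (ys+t)) (Set.Icc 0 t1) := by
    have heq : (fun t => Psi (xs+t) (ys+t))
        = fun t => N * exp t / (A * (exp t)^2 + (B + al) * exp t + D) := funext hPsiEq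
    rw [heq]
    have hnum : Continuous fun t : ℝ => N * exp t := continuous_const.mul Real.continuous_exp
    have hden : Continuous fun t : ℝ => A * (exp t)^2 + (B + al) * exp t + D :=
      ((continuous_const.mul (Real.continuous_exp.pow 2)).add
        (continuous_const.mul Real.continuous_exp)).add continuous_const
    exact (hnum.div hden (fun t => (hSig t).ne')).continuousOn
  have hivt := intermediate_value_Icc' (le_of_lt ht1pos) hcont
  have hmem : Psi0 ∈ Set.Icc (Psi (xs+t1) (ys+t1)) (Psi (xs+0) (ys+0)) := by
    constructor
    · exact le_of_lt hlt
    · simp only [add_zero]; exact le_of_lt hgt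
  obtain ⟨t, htmem, hteq⟩ := hivt hmem
  simp only at hteq
  -- t > 0
  have ht : 0 < t := by
    rcases eq_or_lt_of_le htmem.1 with h | h
    · exfalso; apply hne0
      rw [← h] at hteq
      simpa using hteq
    · exact h
  have hu2 : 1 < exp t := by
    rw [← Real.exp_zero]; exact Real.exp_lt_exp.mpr ht
  -- R strictly decreases along the ray
  have hR0 := (key 0).2
  simp only [add_zero, Real.exp_zero, one_pow, mul_one] at hR0
  have hRt := (key t).2
  have hStpos : 0 < A * (exp t)^2 + (B + al) * exp t + D := hSig t
  have hS0pos : 0 < A + (B + al) + D := hSig0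
  have hcross : (al * exp t + D) * (A + (B + al) + D)
      < (al + D) * (A * (exp t)^2 + (B + al) * exp t + D) := by
    have hid : (al + D) * (A * (exp t)^2 + (B + al) * exp t + D)
        - (al * exp t + D) * (A + (B + al) + D)
        = (exp t - 1) * (al * A * exp t + D * A * (exp t + 1) + D * B) := by ring
    have hin : 0 < al * A * exp t + D * A * (exp t + 1) + D * B := by
      have h1 := mul_pos (mul_pos hal hA) (exp_pos t)
      have h2 := mul_pos (mul_pos hD hA) (by linarith : (0:ℝ) < exp t + 1)
      have h3 := mul_pos hD hB
      linarith
    have hpos := mul_pos (show (0:ℝ) < exp t - 1 by linarith) hin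
    linarith [hid, hpos]
  have e0 : R xs ys * ((A * (exp t)^2 + (B + al) * exp t + D) * (A + (B + al) + D))
      = (al + D) * (A * (exp t)^2 + (B + al) * exp t + D) := by
    linear_combination (A * (exp t)^2 + (B + al) * exp t + D) * hR0
  have et : R (xs+t) (ys+t) * ((A * (exp t)^2 + (B + al) * exp t + D) * (A + (B + al) + D))
      = (al * exp t + D) * (A + (B + al) + D) := by
    linear_combination (A + (B + al) + D) * hRt
  have hfin : R (xs+t) (ys+t) * ((A * (exp t)^2 + (B + al) * exp t + D) * (A + (B + al) + D))
      < R xs ys * ((A * (exp t)^2 + (B + al) * exp t + D) * (A + (B + al) + D)) := by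
    rw [e0, et]; exact hcross
  have hRlt : R (xs+t) (ys+t) < R xs ys :=
    lt_of_mul_lt_mul_right hfin (le_of_lt (mul_pos hStpos hS0pos))
  have := hmin (xs+t) (ys+t) (le_of_eq hteq.symm)
  linarith
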